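/- For every solution x : [t₀, ∞) → ℝⁿ of the masked average-consensus system with x(t₀) = x₀, the ω-limit set of the trajectory is the singleton {(𝟙ᵀx₀/n)·𝟙}; i.e., a point p ∈ ℝⁿ satisfies p = lim_{k→∞} x(t_k) for some sequence t_k → ∞ if and only if p = (𝟙ᵀx₀/n)·𝟙. -/

import Mathlib

set_option maxHeartbeats 1000000


open Set Filter Topology Matrix

/-- Right-hand side of the masked average-consensus system
`ẋ = -L (I + Φ e^{-Σ t}) (x + e^{-Δ t} γ)`, written componentwise through the
diagonal matrices `Φ = diag φ`, `Σ = diag σ`, `Δ = diag δ`. -/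
noncomputable def maskedConsensusRHS {n : ℕ} (L : Matrix (Fin n) (Fin n) ℝ)
    (φ σ δ γ : Fin n → ℝ) (t : ℝ) (x : Fin n → ℝ) : Fin n → ℝ :=
  -(L.mulVec (fun i => (1 + φ i * Real.exp (-σ i * t)) * (x i + Real.exp (-δ i * t) * γ i)))

lemma quad_continuous {n : ℕ} (M : Matrix (Fin n) (Fin n) ℝ) :
    Continuous fun w : Fin n → ℝ => w ⬝ᵥ M.mulVec w := by
  simp only [dotProduct, Matrix.mulVec]
  exact continuous_finset_sum _ fun i _ =>
    (continuous_apply i).mul (continuous_finset_sum _ fun j _ =>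
      continuous_const.mul (continuous_apply j))

lemma spectral_gap {n : ℕ} (hn : 2 ≤ n) (L : Matrix (Fin n) (Fin n) ℝ)
    (hLpos : ∀ w : Fin n → ℝ, w ≠ 0 → (∑ i, w i) = 0 →
      0 < dotProduct w ((L + L.transpose).mulVec w)) :
    ∃ μ > 0, ∀ e : Fin n → ℝ, (∑ i, e i) = 0 →
      μ * (∑ i, (e i)^2) ≤ e ⬝ᵥ ((L + L.transpose).mulVec e) := by
  set M := L + L.transpose with hM
  set Q : (Fin n → ℝ) → ℝ := fun w => w ⬝ᵥ M.mulVec w with hQ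
  have hQc : Continuous Q := quad_continuous M
  set K : Set (Fin n → ℝ) := {w | (∑ i, w i) = 0 ∧ (∑ i, (w i)^2) = 1} with hK
  have hKc : IsCompact K := by
    have hclosed : IsClosed K := by
      have h1 : IsClosed {w : Fin n → ℝ | (∑ i, w i) = 0} :=
        isClosed_eq (continuous_finset_sum _ fun i _ => continuous_apply i) continuous_const
      have h2 : IsClosed {w : Fin n → ℝ | (∑ i, (w i)^2) = 1} :=
        isClosed_eq (continuous_finset_sum _ fun i _ => (continuous_apply i).pow 2)
          continuous_const
      exact h1.inter h2
    have hsub : K ⊆ Metric.closedBall 0 1 := by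
      intro w hw
      rw [Metric.mem_closedBall, dist_zero_right]
      rw [pi_norm_le_iff_of_nonneg zero_le_one]
      intro i
      have h1 : (w i)^2 ≤ 1 := by
        have := hw.2
        have : (w i)^2 ≤ ∑ j, (w j)^2 :=
          Finset.single_le_sum (fun j _ => sq_nonneg (w j)) (Finset.mem_univ i)
        linarith [hw.2]
      calc ‖w i‖ = |w i| := rfl
        _ ≤ 1 := abs_le_one_iff_mul_self_le_one.mpr (by nlinarith)
    exact (isCompact_closedBall 0 1).of_isClosed_subset hclosed hsub
  have hKne : K.Nonempty := by
    have h0 : 0 < n := by omega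
    have h1 : 1 < n := by omega
    set i0 : Fin n := ⟨0, h0⟩ with hi0
    set i1 : Fin n := ⟨1, h1⟩ with hi1
    have h01 : i0 ≠ i1 := by simp [hi0, hi1, Fin.ext_iff]
    set s : ℝ := Real.sqrt (1/2) with hs
    have hs2 : s^2 = 1/2 := Real.sq_sqrt (by norm_num)
    set w : Fin n → ℝ := (Pi.single i0 s : Fin n → ℝ) - Pi.single i1 s with hw
    refine ⟨w, ?_, ?_⟩
    · simp [hw, Finset.sum_sub_distrib, Finset.sum_pi_single']
    · have hkey : ∀ j, (w j)^2
          = (Pi.single i0 (s^2) : Fin n → ℝ) j + (Pi.single i1 (s^2) : Fin n → ℝ) j := by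
        intro j
        rcases eq_or_ne j i0 with rfl | hj0
        · simp [hw, Pi.single_eq_of_ne h01, Pi.single_eq_of_ne h01.symm,
            Pi.single_eq_same]
        · rcases eq_or_ne j i1 with rfl | hj1
          · simp [hw, Pi.single_eq_of_ne h01, Pi.single_eq_of_ne h01.symm,
              Pi.single_eq_same]
          · simp [hw, Pi.single_eq_of_ne hj0, Pi.single_eq_of_ne hj1]
      rw [Finset.sum_congr rfl fun j _ => hkey j]
      rw [Finset.sum_add_distrib, Finset.sum_pi_single', Finset.sum_pi_single']
      rw [hs2]; simp; norm_num
  obtain ⟨w₀, hw₀K, hw₀min⟩ := hKc.exists_isMinOn hKne hQc.continuousOn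
  have hw₀ne : w₀ ≠ 0 := by
    intro h
    have := hw₀K.2
    simp [h] at this
  set μ := Q w₀ with hμ
  have hμpos : 0 < μ := hLpos w₀ hw₀ne hw₀K.1
  refine ⟨μ, hμpos, fun e he => ?_⟩
  rcases eq_or_ne e 0 with rfl | hene
  · simp [hQ, dotProduct]
  · set r : ℝ := Real.sqrt (∑ i, (e i)^2) with hr
    have hsum_pos : 0 < ∑ i, (e i)^2 := by
      obtain ⟨i, hi⟩ := Function.ne_iff.mp hene
      exact Finset.sum_pos' (fun j _ => sq_nonneg _)
        ⟨i, Finset.mem_univ i, (sq_nonneg _).lt_of_ne (Ne.symm (pow_ne_zero 2 hi))⟩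
    have hr2 : r^2 = ∑ i, (e i)^2 := Real.sq_sqrt hsum_pos.le
    have hrpos : 0 < r := Real.sqrt_pos.mpr hsum_pos
    set v : Fin n → ℝ := r⁻¹ • e with hv
    have hvK : v ∈ K := by
      constructor
      · simp [hv, ← Finset.mul_sum, he]
      · have : (∑ i, (v i)^2) = r⁻¹^2 * ∑ i, (e i)^2 := by
          simp [hv, Finset.mul_sum, mul_pow]
        rw [this, ← hr2]
        field_simp
    have hμv : μ ≤ Q v := hw₀min hvK
    have hQv : Q v = r⁻¹ * (r⁻¹ * Q e) := by
      simp [hQ, hv, smul_dotProduct, Matrix.mulVec_smul, dotProduct_smul,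
        smul_eq_mul]
    rw [hQv] at hμv
    have := mul_le_mul_of_nonneg_left hμv (le_of_lt (mul_pos hrpos hrpos))
    calc μ * ∑ i, (e i)^2 = (r * r) * μ := by rw [← hr2]; ring
      _ ≤ (r * r) * (r⁻¹ * (r⁻¹ * Q e)) := this
      _ = Q e := by field_simp

lemma decay_to_zero (V W : ℝ → ℝ) (T m a C : ℝ)
    (hd : ∀ t ∈ Set.Ici T, HasDerivAt V (W t) t)
    (hnn : ∀ t ∈ Set.Ici T, 0 ≤ V t)
    (hm : 0 < m) (hma : m < a) (hC : 0 ≤ C)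
    (hb : ∀ t ∈ Set.Ici T, W t ≤ -m * V t + C * Real.exp (-a * t)) :
    Tendsto V atTop (nhds 0) := by
  set F : ℝ → ℝ := fun t => Real.exp (m * t) * V t + (C / (a - m)) * Real.exp ((m - a) * t)
    with hF
  have hFd : ∀ t ∈ Set.Ici T, HasDerivAt F
      (m * Real.exp (m * t) * V t + Real.exp (m * t) * W t
        + (C / (a - m)) * ((m - a) * Real.exp ((m - a) * t))) t := by
    intro t ht
    have h1 : HasDerivAt (fun t => Real.exp (m * t)) (m * Real.exp (m * t)) t := by
      simpa [mul_comm] using ((hasDerivAt_id t).const_mul m).exp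
    have h2 : HasDerivAt (fun t => Real.exp ((m - a) * t)) ((m - a) * Real.exp ((m - a) * t)) t := by
      simpa [mul_comm] using ((hasDerivAt_id t).const_mul (m - a)).exp
    exact ((h1.mul (hd t ht)).add (h2.const_mul (C / (a - m)))).congr_deriv (by ring)
  have hanti : AntitoneOn F (Set.Ici T) := by
    apply antitoneOn_of_deriv_nonpos (convex_Ici T)
    · exact fun t ht => ((hFd t ht).continuousAt).continuousWithinAt
    · intro t ht
      rw [interior_Ici] at ht
      exact (hFd t (Set.mem_Ici.mpr (le_of_lt ht))).differentiableAt.differentiableWithinAt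
    · intro t ht
      rw [interior_Ici] at ht
      rw [(hFd t (Set.mem_Ici.mpr (le_of_lt ht))).deriv]
      have hWb := hb t (Set.mem_Ici.mpr (le_of_lt ht))
      have key : Real.exp (m * t) * W t ≤ Real.exp (m * t) * (-m * V t + C * Real.exp (-a * t)) :=
        mul_le_mul_of_nonneg_left hWb (Real.exp_nonneg _)
      have e1 : Real.exp (m * t) * Real.exp (-a * t) = Real.exp ((m - a) * t) := by
        rw [← Real.exp_add]; ring_nf
      have hdiv : C / (a - m) * (m - a) = -C := by
        field_simp [show a - m ≠ 0 by linarith]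
        ring
      nlinarith [Real.exp_nonneg (m * t), Real.exp_nonneg ((m - a) * t),
        mul_le_mul_of_nonneg_left hWb (Real.exp_nonneg (m * t))]
  -- hence for t ≥ T, 0 ≤ V t ≤ F T * exp (-m t)
  have hbound : ∀ t ∈ Set.Ici T, V t ≤ (F T) * Real.exp (-m * t) := by
    intro t ht
    have h1 : F t ≤ F T := hanti (Set.self_mem_Ici) ht ht
    have h2 : Real.exp (m * t) * V t ≤ F t := by
      have := mul_nonneg (div_nonneg hC (by linarith : (0:ℝ) ≤ a - m))
        (Real.exp_nonneg ((m - a) * t))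
      simp only [hF]; linarith
    have h3 : Real.exp (m * t) * V t ≤ F T := h2.trans h1
    have h4 := mul_le_mul_of_nonneg_left h3 (Real.exp_nonneg (-m * t))
    calc V t = Real.exp (-m * t) * (Real.exp (m * t) * V t) := by
          rw [← mul_assoc, ← Real.exp_add]; ring_nf; simp
      _ ≤ Real.exp (-m * t) * F T := h4
      _ = F T * Real.exp (-m * t) := by ring
  have hto : Tendsto (fun t => (F T) * Real.exp (-m * t)) atTop (nhds 0) := by
    have : Tendsto (fun t : ℝ => Real.exp (-m * t)) atTop (nhds 0) := by
      apply Real.tendsto_exp_atBot.comp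
      exact (tendsto_id.const_mul_atTop_of_neg (by linarith)).comp tendsto_id
    simpa using this.const_mul (F T)
  apply squeeze_zero' (eventually_atTop.mpr ⟨T, hnn⟩) (eventually_atTop.mpr ⟨T, hbound⟩) hto

/-- **Corollary 1, second conclusion (ω-limit set of the masked system).**
For every solution `x : [t₀, ∞) → ℝⁿ` of the masked average-consensus system
`ẋ = -L (I + Φ e^{-Σ t}) (x + e^{-Δ t} γ)` with `x(t₀) = x₀`, where `L` is an
irreducible weight-balanced Laplacian (`L𝟙 = Lᵀ𝟙 = 0`, `wᵀ(L+Lᵀ)w > 0` for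
nonzero `w ⊥ 𝟙`) and `φᵢ, σᵢ, δᵢ > 0`, the ω-limit set of the trajectory is the
singleton `{(𝟙ᵀx₀/n) 𝟙}`: a point `p` is the limit of `x(t_k)` along some
sequence `t_k → ∞` iff `p = (𝟙ᵀx₀/n) 𝟙`. -/
theorem masked_consensus_omega_limit_set
    (n : ℕ) (hn : 2 ≤ n) (L : Matrix (Fin n) (Fin n) ℝ) (φ σ δ γ : Fin n → ℝ)
    (hL1 : L.mulVec (fun _ => (1 : ℝ)) = 0)
    (hLT1 : L.transpose.mulVec (fun _ => (1 : ℝ)) = 0)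
    (hLpos : ∀ w : Fin n → ℝ, w ≠ 0 → (∑ i, w i) = 0 →
      0 < dotProduct w ((L + L.transpose).mulVec w))
    (hφ : ∀ i, 0 < φ i) (hσ : ∀ i, 0 < σ i) (hδ : ∀ i, 0 < δ i)
    (t₀ : ℝ) (ht₀ : 0 ≤ t₀) (x₀ : Fin n → ℝ) (x : ℝ → Fin n → ℝ)
    (hinit : x t₀ = x₀)
    (hsol : ∀ t ∈ Set.Ici t₀, HasDerivAt x (maskedConsensusRHS L φ σ δ γ t (x t)) t) :
    ∀ p : Fin n → ℝ,
      (∃ u : ℕ → ℝ, Filter.Tendsto u Filter.atTop Filter.atTop ∧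
        Filter.Tendsto (fun k => x (u k)) Filter.atTop (nhds p)) ↔
      p = (fun _ => (∑ i, x₀ i) / n) := by
  have hnpos : (0:ℝ) < n := by positivity
  set c : ℝ := (∑ i, x₀ i) / n with hc
  -- coordinatewise derivatives
  have hxi : ∀ t ∈ Set.Ici t₀, ∀ i, HasDerivAt (fun s => x s i)
      (maskedConsensusRHS L φ σ δ γ t (x t) i) t :=
    fun t ht i => (hasDerivAt_pi.mp (hsol t ht)) i
  -- conservation of the sum
  have hsum : ∀ t ∈ Set.Ici t₀, (∑ i, x t i) = ∑ i, x₀ i := by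
    have hS : ∀ t ∈ Set.Ici t₀, HasDerivAt (fun s => ∑ i, x s i) 0 t := by
      intro t ht
      have h : HasDerivAt (fun s => ∑ i, x s i)
          (∑ i, maskedConsensusRHS L φ σ δ γ t (x t) i) t :=
        HasDerivAt.fun_sum (fun i _ => hxi t ht i)
      have hz : (∑ i, maskedConsensusRHS L φ σ δ γ t (x t) i) = 0 := by
        simp only [maskedConsensusRHS, Pi.neg_apply, Finset.sum_neg_distrib]
        have : (∑ i, (L.mulVec (fun i => (1 + φ i * Real.exp (-σ i * t)) *
            (x t i + Real.exp (-δ i * t) * γ i))) i)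
            = (fun _ => (1:ℝ)) ⬝ᵥ (L.mulVec (fun i => (1 + φ i * Real.exp (-σ i * t)) *
              (x t i + Real.exp (-δ i * t) * γ i))) := by
          simp [dotProduct]
        rw [this, Matrix.dotProduct_mulVec, ← Matrix.mulVec_transpose, hLT1]
        simp [dotProduct]
      rwa [hz] at h
    intro t ht
    have key : ∀ s ∈ Set.Icc t₀ t, (fun s => ∑ i, x s i) s = (fun s => ∑ i, x s i) t₀ := by
      apply constant_of_has_deriv_right_zero
      · exact fun s hs => ((hS s (Set.mem_Ici.mpr hs.1)).continuousAt).continuousWithinAt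
      · exact fun s hs => (hS s (Set.mem_Ici.mpr hs.1)).hasDerivWithinAt
    have := key t ⟨ht, le_refl t⟩
    simpa [hinit] using this
  have hnc : (n : ℝ) * c = ∑ i, x₀ i := by
    rw [hc]; field_simp
  -- Lyapunov function
  set V : ℝ → ℝ := fun t => ∑ i, (x t i - c)^2 with hV
  set Vd : ℝ → ℝ := fun t => ∑ i, 2 * (x t i - c) * maskedConsensusRHS L φ σ δ γ t (x t) i
    with hVd
  have hVderiv : ∀ t ∈ Set.Ici t₀, HasDerivAt V (Vd t) t := by
    intro t ht
    have : HasDerivAt V (∑ i, 2 * (x t i - c)^1 * maskedConsensusRHS L φ σ δ γ t (x t) i) t := by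
      apply HasDerivAt.fun_sum
      intro i _
      have h := ((hxi t ht i).sub_const c).fun_pow 2
      simpa using h
    exact this.congr_deriv (by simp [hVd])
  have hVnn : ∀ t, 0 ≤ V t := fun t => Finset.sum_nonneg fun i _ => sq_nonneg _
  -- zero-sum of the error
  have hEsum : ∀ t ∈ Set.Ici t₀, (∑ i, (x t i - c)) = 0 := by
    intro t ht
    rw [Finset.sum_sub_distrib, hsum t ht]
    simp [← hnc, mul_comm]
  -- constants
  have hne : (Finset.univ : Finset (Fin n)).Nonempty := ⟨⟨0, by omega⟩, Finset.mem_univ _⟩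
  set a : ℝ := min (Finset.univ.inf' hne σ) (Finset.univ.inf' hne δ) with ha
  have ha_pos : 0 < a := by
    apply lt_min
    · exact (Finset.lt_inf'_iff hne).mpr fun i _ => hσ i
    · exact (Finset.lt_inf'_iff hne).mpr fun i _ => hδ i
  have haσ : ∀ i, a ≤ σ i := fun i => (min_le_left _ _).trans (Finset.inf'_le _ (Finset.mem_univ i))
  have haδ : ∀ i, a ≤ δ i := fun i => (min_le_right _ _).trans (Finset.inf'_le _ (Finset.mem_univ i))
  set P : ℝ := ∑ i, φ i with hPdef
  have hP : ∀ i, φ i ≤ P := fun i =>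
    Finset.single_le_sum (fun j _ => (hφ j).le) (Finset.mem_univ i)
  have hPnn : 0 ≤ P := Finset.sum_nonneg fun j _ => (hφ j).le
  set Γ : ℝ := ∑ i, |γ i| with hΓdef
  have hΓ : ∀ i, |γ i| ≤ Γ := fun i =>
    Finset.single_le_sum (f := fun j => |γ j|) (fun j _ => abs_nonneg _) (Finset.mem_univ i)
  have hΓnn : 0 ≤ Γ := Finset.sum_nonneg fun j _ => abs_nonneg _
  set CL : ℝ := ∑ i, ∑ j, |L i j| with hCLdef
  have hCL : ∀ i, (∑ j, |L i j|) ≤ CL := fun i =>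
    Finset.single_le_sum (f := fun k => ∑ j, |L k j|)
      (fun k _ => Finset.sum_nonneg fun j _ => abs_nonneg _) (Finset.mem_univ i)
  have hCLnn : 0 ≤ CL := Finset.sum_nonneg fun i _ => Finset.sum_nonneg fun j _ => abs_nonneg _
  obtain ⟨μ, hμpos, hμ⟩ := spectral_gap hn L hLpos
  set A0 : ℝ := P * (|c| + Γ) + Γ with hA0def
  have hA0nn : 0 ≤ A0 := by positivity
  set D : ℝ := 2 * n * CL with hDdef
  have hDnn : 0 ≤ D := by positivity
  set C0 : ℝ := D * A0 with hC0def
  have hC0nn : 0 ≤ C0 := mul_nonneg hDnn hA0nn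
  set C1 : ℝ := D * (P + A0) with hC1def
  have hC1nn : 0 ≤ C1 := mul_nonneg hDnn (by linarith)
  -- the main differential inequality
  have hineq : ∀ t ∈ Set.Ici t₀, Vd t ≤ -μ * V t + Real.exp (-a*t) * (C0 + C1 * V t) := by
    intro t ht
    have ht0t : (0:ℝ) ≤ t := le_trans ht₀ ht
    set E : Fin n → ℝ := fun i => x t i - c with hE
    set g : Fin n → ℝ := fun j => Real.exp (-δ j * t) * γ j with hg
    set u : Fin n → ℝ := fun j => φ j * Real.exp (-σ j * t) * (E j + c + g j) + g j with hu
    have hRHS : maskedConsensusRHS L φ σ δ γ t (x t)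
        = fun i => -((L.mulVec E) i + (L.mulVec u) i) := by
      have hwE : (fun j => (1 + φ j * Real.exp (-σ j * t)) * (x t j + Real.exp (-δ j * t) * γ j))
          = E + u + (fun _ => c) := by
        funext j
        simp only [hE, hu, hg, Pi.add_apply]
        ring
      have hcone : L.mulVec (fun _ : Fin n => c) = 0 := by
        have : (fun _ : Fin n => c) = c • (fun _ : Fin n => (1:ℝ)) := by
          funext j; simp
        rw [this, Matrix.mulVec_smul, hL1]
        simp
      funext i
      simp only [maskedConsensusRHS, hwE, Matrix.mulVec_add, hcone, Pi.neg_apply, Pi.add_apply,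
        Pi.zero_apply]
      ring
    have hVdeq : Vd t = -(2 * (E ⬝ᵥ (L.mulVec E))) - 2 * (E ⬝ᵥ (L.mulVec u)) := by
      have step : Vd t = ∑ i, (-(2 * (E i * (L.mulVec E) i)) - 2 * (E i * (L.mulVec u) i)) := by
        simp only [hVd, hRHS]
        apply Finset.sum_congr rfl
        intro i _
        simp only [hE]
        ring
      rw [step, Finset.sum_sub_distrib]
      simp only [dotProduct, Finset.mul_sum]
      rw [Finset.sum_neg_distrib]
    -- quadratic part
    have hquad : μ * V t ≤ 2 * (E ⬝ᵥ (L.mulVec E)) := by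
      have h1 := hμ E (hEsum t ht)
      have h2 : E ⬝ᵥ ((L + L.transpose).mulVec E) = 2 * (E ⬝ᵥ (L.mulVec E)) := by
        rw [Matrix.add_mulVec, dotProduct_add]
        have h3 : E ⬝ᵥ (L.transpose.mulVec E) = E ⬝ᵥ (L.mulVec E) := by
          rw [Matrix.dotProduct_mulVec, Matrix.vecMul_transpose, dotProduct_comm]
        rw [h3]; ring
      rw [h2] at h1
      exact h1
    -- cross part
    set sq : ℝ := Real.sqrt (V t) with hsqdef
    have hsqnn : 0 ≤ sq := Real.sqrt_nonneg _
    have hsq2 : sq^2 = V t := Real.sq_sqrt (hVnn t)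
    have hsqle : sq ≤ 1 + V t := by nlinarith [sq_nonneg (sq - 1)]
    have hEb : ∀ i, |E i| ≤ sq := by
      intro i
      rw [← Real.sqrt_sq_eq_abs]
      exact Real.sqrt_le_sqrt (Finset.single_le_sum (fun j _ => sq_nonneg (x t j - c))
        (Finset.mem_univ i))
    have hexa : ∀ (b : ℝ), a ≤ b → Real.exp (-b * t) ≤ Real.exp (-a * t) := by
      intro b hb
      apply Real.exp_le_exp.mpr
      nlinarith
    have hexle1 : ∀ (b : ℝ), 0 < b → Real.exp (-b * t) ≤ 1 := by
      intro b hb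
      apply Real.exp_le_one_iff.mpr
      nlinarith
    have hgb : ∀ j, |g j| ≤ Real.exp (-a * t) * Γ := by
      intro j
      simp only [hg, abs_mul, Real.abs_exp]
      exact mul_le_mul (hexa _ (haδ j)) (hΓ j) (abs_nonneg _) (Real.exp_nonneg _)
    set U : ℝ := P * (sq + |c| + Γ) + Γ with hUdef
    have hUnn : 0 ≤ U := by positivity
    have hub : ∀ j, |u j| ≤ Real.exp (-a * t) * U := by
      intro j
      have h1 : |u j| ≤ φ j * Real.exp (-σ j * t) * |E j + c + g j| + |g j| := by
        calc |u j| ≤ |φ j * Real.exp (-σ j * t) * (E j + c + g j)| + |g j| := abs_add_le _ _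
          _ = φ j * Real.exp (-σ j * t) * |E j + c + g j| + |g j| := by
              rw [abs_mul, abs_mul, abs_of_pos (hφ j), Real.abs_exp]
      have h2 : |E j + c + g j| ≤ sq + |c| + Γ := by
        calc |E j + c + g j| ≤ |E j + c| + |g j| := abs_add_le _ _
          _ ≤ |E j| + |c| + |g j| := by linarith [abs_add_le (E j) c]
          _ ≤ sq + |c| + Γ := by
              have := hgb j
              have h4 := hexle1 a ha_pos
              nlinarith [hEb j, Real.exp_nonneg (-a*t), hΓnn]
      have h3 : φ j * Real.exp (-σ j * t) * |E j + c + g j|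
          ≤ P * Real.exp (-a * t) * (sq + |c| + Γ) := by
        have hf1 : φ j * Real.exp (-σ j * t) ≤ P * Real.exp (-a * t) :=
          mul_le_mul (hP j) (hexa _ (haσ j)) (Real.exp_nonneg _) hPnn
        exact mul_le_mul hf1 h2 (abs_nonneg _) (by positivity)
      have h5 := hgb j
      calc |u j| ≤ φ j * Real.exp (-σ j * t) * |E j + c + g j| + |g j| := h1
        _ ≤ P * Real.exp (-a * t) * (sq + |c| + Γ) + Real.exp (-a * t) * Γ := by linarith
        _ = Real.exp (-a * t) * U := by rw [hUdef]; ring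
    have hLub : ∀ i, |(L.mulVec u) i| ≤ CL * (Real.exp (-a * t) * U) := by
      intro i
      have h1 : (L.mulVec u) i = ∑ j, L i j * u j := by
        simp [Matrix.mulVec, dotProduct]
      rw [h1]
      calc |∑ j, L i j * u j| ≤ ∑ j, |L i j * u j| := Finset.abs_sum_le_sum_abs _ _
        _ ≤ ∑ j, |L i j| * (Real.exp (-a * t) * U) := by
            apply Finset.sum_le_sum
            intro j _
            rw [abs_mul]
            exact mul_le_mul_of_nonneg_left (hub j) (abs_nonneg _)
        _ = (∑ j, |L i j|) * (Real.exp (-a * t) * U) := by rw [← Finset.sum_mul]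
        _ ≤ CL * (Real.exp (-a * t) * U) :=
            mul_le_mul_of_nonneg_right (hCL i) (by positivity)
    have hcross : |2 * (E ⬝ᵥ (L.mulVec u))| ≤ Real.exp (-a * t) * (C0 + C1 * V t) := by
      have h1 : |E ⬝ᵥ (L.mulVec u)| ≤ ∑ _i : Fin n, sq * (CL * (Real.exp (-a * t) * U)) := by
        calc |E ⬝ᵥ (L.mulVec u)| ≤ ∑ i, |E i * (L.mulVec u) i| := by
              simp only [dotProduct]
              exact Finset.abs_sum_le_sum_abs _ _
          _ ≤ ∑ _i : Fin n, sq * (CL * (Real.exp (-a * t) * U)) := by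
              apply Finset.sum_le_sum
              intro i _
              rw [abs_mul]
              exact mul_le_mul (hEb i) (hLub i) (abs_nonneg _) hsqnn
      rw [Finset.sum_const, Finset.card_univ, Fintype.card_fin, nsmul_eq_mul] at h1
      have h2 : |2 * (E ⬝ᵥ (L.mulVec u))| = 2 * |E ⬝ᵥ (L.mulVec u)| := by
        rw [abs_mul]; norm_num
      rw [h2]
      have hkey : 2 * ((n:ℝ) * (sq * (CL * (Real.exp (-a * t) * U))))
          ≤ Real.exp (-a * t) * (C0 + C1 * V t) := by
        have hUexp : sq * U = P * (V t) + (P * (|c| + Γ) + Γ) * sq := by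
          rw [hUdef, ← hsq2]; ring
        have hsqb : (P * (|c| + Γ) + Γ) * sq ≤ (P * (|c| + Γ) + Γ) * (1 + V t) :=
          mul_le_mul_of_nonneg_left hsqle (by positivity)
        have expnn : (0:ℝ) ≤ Real.exp (-a * t) := Real.exp_nonneg _
        calc 2 * ((n:ℝ) * (sq * (CL * (Real.exp (-a * t) * U))))
            = Real.exp (-a * t) * (D * (sq * U)) := by rw [hDdef]; ring
          _ = Real.exp (-a * t) * (D * (P * V t + (P * (|c| + Γ) + Γ) * sq)) := by
              rw [hUexp]
          _ ≤ Real.exp (-a * t) * (D * (P * V t + (P * (|c| + Γ) + Γ) * (1 + V t))) := by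
              apply mul_le_mul_of_nonneg_left _ expnn
              apply mul_le_mul_of_nonneg_left _ hDnn
              linarith
          _ = Real.exp (-a * t) * (C0 + C1 * V t) := by
              rw [hC0def, hC1def, hA0def]; ring
      linarith
    -- combine
    rw [hVdeq]
    have h6 : -(2 * (E ⬝ᵥ (L.mulVec E))) ≤ -μ * V t := by linarith
    have h7 : -(2 * (E ⬝ᵥ (L.mulVec u))) ≤ |2 * (E ⬝ᵥ (L.mulVec u))| := neg_le_abs _
    linarith
  -- choose T beyond which the exponential perturbation is small
  have hto0 : Tendsto (fun t => Real.exp (-a * t) * C1) atTop (nhds 0) := by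
    have h1 : Tendsto (fun t : ℝ => Real.exp (-a * t)) atTop (nhds 0) := by
      apply Real.tendsto_exp_atBot.comp
      exact (tendsto_id.const_mul_atTop_of_neg (by linarith)).comp tendsto_id
    simpa using h1.mul_const C1
  have hev : ∀ᶠ t in atTop, Real.exp (-a * t) * C1 ≤ μ / 2 ∧ t₀ ≤ t := by
    filter_upwards [hto0.eventually (ge_mem_nhds (by linarith : (0:ℝ) < μ / 2)),
      eventually_ge_atTop t₀] with t h1 h2
    exact ⟨h1, h2⟩
  obtain ⟨T, hT⟩ := eventually_atTop.mp hev
  have hTt₀ : t₀ ≤ T := (hT T le_rfl).2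
  set m : ℝ := min (μ / 2) (a / 2) with hm
  have hmpos : 0 < m := lt_min (by linarith) (by linarith)
  have hma : m < a := lt_of_le_of_lt (min_le_right _ _) (by linarith)
  have hfinal : ∀ t ∈ Set.Ici T, Vd t ≤ -m * V t + C0 * Real.exp (-a * t) := by
    intro t ht
    have htt₀ : t ∈ Set.Ici t₀ := le_trans hTt₀ ht
    have h1 := hineq t htt₀
    have h2 : Real.exp (-a * t) * C1 ≤ μ / 2 := (hT t ht).1
    have h3 : Real.exp (-a * t) * (C1 * V t) ≤ (μ / 2) * V t := by
      rw [← mul_assoc]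
      exact mul_le_mul_of_nonneg_right h2 (hVnn t)
    have h4 : m ≤ μ / 2 := min_le_left _ _
    nlinarith [hVnn t, Real.exp_nonneg (-a * t)]
  have hVto0 : Tendsto V atTop (nhds 0) :=
    decay_to_zero V Vd T m a C0
      (fun t ht => hVderiv t (le_trans hTt₀ ht))
      (fun t _ => hVnn t) hmpos hma hC0nn hfinal
  -- hence x(t) → c𝟙
  have hxlim : Tendsto x atTop (nhds (fun _ => c)) := by
    rw [tendsto_pi_nhds]
    intro i
    have hsq : Tendsto (fun t => (x t i - c)^2) atTop (nhds 0) := by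
      apply squeeze_zero (fun t => sq_nonneg _) (fun t => ?_) hVto0
      exact Finset.single_le_sum (f := fun j => (x t j - c)^2)
        (fun j _ => sq_nonneg _) (Finset.mem_univ i)
    have habs : Tendsto (fun t => |x t i - c|) atTop (nhds 0) := by
      have h := (Real.continuous_sqrt.tendsto 0).comp hsq
      simpa [Function.comp_def, Real.sqrt_sq_eq_abs] using h
    have hdiff : Tendsto (fun t => x t i - c) atTop (nhds 0) :=
      (tendsto_zero_iff_abs_tendsto_zero _).mpr habs
    have := hdiff.add_const c
    simpa using this
  -- conclusion
  intro p
  constructor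
  · rintro ⟨u, hu, hup⟩
    have h1 : Tendsto (fun k => x (u k)) atTop (nhds (fun _ => c)) := hxlim.comp hu
    exact tendsto_nhds_unique hup h1
  · rintro rfl
    refine ⟨fun k => t₀ + k, ?_, ?_⟩
    · exact tendsto_atTop_add_const_left _ t₀ tendsto_natCast_atTop_atTop
    · exact hxlim.comp (tendsto_atTop_add_const_left _ t₀ tendsto_natCast_atTop_atTop)
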